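/- Let d ≥ 2 be an integer and c > 0. Then for all r > 0, r^{1−d} ∫₀^r s^{d−1} e^{−c(r²−s²)} ds ≤ C r/(1 + √c·r)², where C depends only on d. -/

import Mathlib

open MeasureTheory

theorem stmt8_aux (c r : ℝ) (hc : 0 < c) (hr : 0 < r) :
    (∫ s in (0:ℝ)..r, s * Real.exp (-c * (r ^ 2 - s ^ 2)))
      = (1 - Real.exp (-(c * r ^ 2))) / (2 * c) := by
  have hderiv : ∀ s ∈ Set.uIcc (0:ℝ) r,
      HasDerivAt (fun s => Real.exp (-c * (r ^ 2 - s ^ 2)) / (2 * c))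
        (s * Real.exp (-c * (r ^ 2 - s ^ 2))) s := by
    intro s _
    have h1 : HasDerivAt (fun s : ℝ => -c * (r ^ 2 - s ^ 2)) (2 * c * s) s := by
      have := ((hasDerivAt_pow 2 s).const_sub (r ^ 2)).const_mul (-c)
      refine this.congr_deriv ?_
      ring
    have h2 := h1.exp.div_const (2 * c)
    refine h2.congr_deriv ?_
    field_simp
  have hcont : IntervalIntegrable (fun s => s * Real.exp (-c * (r ^ 2 - s ^ 2)))
      MeasureTheory.volume 0 r := by
    apply Continuous.intervalIntegrable
    continuity
  rw [intervalIntegral.integral_eq_sub_of_hasDerivAt hderiv hcont]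
  rw [show -c * (r ^ 2 - r ^ 2) = 0 by ring, show -c * (r ^ 2 - 0 ^ 2) = -(c * r ^ 2) by ring]
  rw [Real.exp_zero]
  ring

theorem stmt8 (d : ℕ) (hd : 2 ≤ d) :
    ∃ C > 0, ∀ c : ℝ, 0 < c → ∀ r : ℝ, 0 < r →
      r ^ (1 - (d : ℤ)) * (∫ s in (0:ℝ)..r, s ^ (d - 1) * Real.exp (-c * (r ^ 2 - s ^ 2)))
        ≤ C * r / (1 + Real.sqrt c * r) ^ 2 := by
  refine ⟨2, by norm_num, fun c hc r hr => ?_⟩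
  have hrne : r ≠ 0 := ne_of_gt hr
  set x : ℝ := Real.sqrt c * r with hxdef
  have hx0 : 0 < x := mul_pos (Real.sqrt_pos.mpr hc) hr
  have hx2 : x ^ 2 = c * r ^ 2 := by
    rw [hxdef, mul_pow, Real.sq_sqrt hc.le]
  -- Step 1: bound the integral
  have hI1 : (∫ s in (0:ℝ)..r, s ^ (d - 1) * Real.exp (-c * (r ^ 2 - s ^ 2)))
      ≤ r ^ (d - 2) * ∫ s in (0:ℝ)..r, s * Real.exp (-c * (r ^ 2 - s ^ 2)) := by
    rw [← intervalIntegral.integral_const_mul]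
    apply intervalIntegral.integral_mono_on hr.le
    · apply Continuous.intervalIntegrable; continuity
    · apply Continuous.intervalIntegrable; continuity
    · intro s hs
      have hs0 : 0 ≤ s := hs.1
      have hsr : s ≤ r := hs.2
      have h1 : s ^ (d - 1) ≤ r ^ (d - 2) * s := by
        have : s ^ (d - 1) = s ^ (d - 2) * s := by
          rw [← pow_succ]
          congr 1
          omega
        rw [this]
        exact mul_le_mul_of_nonneg_right (pow_le_pow_left₀ hs0 hsr _) hs0
      calc s ^ (d - 1) * Real.exp (-c * (r ^ 2 - s ^ 2))
          ≤ (r ^ (d - 2) * s) * Real.exp (-c * (r ^ 2 - s ^ 2)) :=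
            mul_le_mul_of_nonneg_right h1 (Real.exp_nonneg _)
        _ = r ^ (d - 2) * (s * Real.exp (-c * (r ^ 2 - s ^ 2))) := by ring
  have hI2 := stmt8_aux c r hc hr
  set E : ℝ := Real.exp (-(c * r ^ 2)) with hEdef
  have hE0 : 0 < E := Real.exp_pos _
  have hE1 : E ≤ 1 := Real.exp_le_one_iff.mpr (by nlinarith)
  have hElb : 1 - c * r ^ 2 ≤ E := by
    have := Real.add_one_le_exp (-(c * r ^ 2))
    linarith
  -- combine powers of r
  have hInt_nonneg : 0 ≤ (∫ s in (0:ℝ)..r, s ^ (d - 1) * Real.exp (-c * (r ^ 2 - s ^ 2))) := by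
    apply intervalIntegral.integral_nonneg hr.le
    intro s hs
    exact mul_nonneg (pow_nonneg hs.1 _) (Real.exp_nonneg _)
  have hzpow_pos : (0:ℝ) < r ^ (1 - (d : ℤ)) := zpow_pos hr _
  have hstep : r ^ (1 - (d : ℤ)) * (∫ s in (0:ℝ)..r, s ^ (d - 1) * Real.exp (-c * (r ^ 2 - s ^ 2)))
      ≤ (1 - E) / (2 * c * r) := by
    have h := mul_le_mul_of_nonneg_left hI1 hzpow_pos.le
    rw [hI2] at h
    have hpow : r ^ (1 - (d : ℤ)) * r ^ (d - 2) = 1 / r := by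
      have : (r : ℝ) ^ (d - 2) = r ^ ((d : ℤ) - 2) := by
        rw [← zpow_natCast]
        congr 1
        omega
      rw [this, ← zpow_add₀ hrne, show (1 - (d:ℤ)) + ((d:ℤ) - 2) = -1 by ring,
        zpow_neg_one, one_div]
    calc r ^ (1 - (d : ℤ)) * (∫ s in (0:ℝ)..r, s ^ (d - 1) * Real.exp (-c * (r ^ 2 - s ^ 2)))
        ≤ r ^ (1 - (d : ℤ)) * (r ^ (d - 2) * ((1 - E) / (2 * c))) := h
      _ = (r ^ (1 - (d : ℤ)) * r ^ (d - 2)) * ((1 - E) / (2 * c)) := by ring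
      _ = (1 - E) / (2 * c * r) := by rw [hpow, div_mul_div_comm, one_mul, mul_comm r (2*c)]
  refine hstep.trans ?_
  -- final elementary inequality
  rw [div_le_div_iff₀ (by positivity) (by positivity)]
  have hkey : (1 - E) * (1 + x) ^ 2 ≤ 4 * x ^ 2 := by
    rcases le_total x 1 with hx1 | hx1
    · nlinarith [hx2, hElb, hE1]
    · nlinarith [hE1, hE0.le]
  nlinarith [hkey, hx2, mul_pos hc hr, sq_nonneg (1 + x)]
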